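/- Let k be a σ-field and A a nonzero k-σ-algebra. Let α, α' ∈ Aˣ be units and a, b, a', b' ∈ k with α² = algebraMap k A (a), σ_A(α) = algebraMap k A (b) · α, α'² = algebraMap k A (a'), and σ_A(α') = algebraMap k A (b') · α'. Then the following are equivalent: (i) there exists a unit g ∈ Aˣ with g² = 1, σ_A(g) = g, and α'⁻¹ ⊗ α' = (1 ⊗ g) · (α⁻¹ ⊗ α) · (g⁻¹ ⊗ 1) in A ⊗[k] A; (ii) there exists a nonzero λ ∈ k with a' = λ² · a and λ · b' = σ_k(λ) · b. (This is the criterion for when two elements α, α' define cohomologous 1-cocycles for the σ-algebraic subgroup G of 𝔾ₘ given by G(R) = {g ∈ Rˣ | g² = 1, σ(g) = g}, underlying the classification of G-torsors X_{a,b} up to isomorphism.) -/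

import Mathlib

open TensorProduct

lemma key_tmul {k A : Type*} [Field k] [CommRing A] [Algebra k A] [Nontrivial A]
    (x : A) (H : (1:A) ⊗ₜ[k] x = x ⊗ₜ[k] (1:A)) : ∃ c : k, x = algebraMap k A c := by
  classical
  by_cases h' : LinearIndependent k ![1, x]
  · have h := h'.linearIndepOn_id
    let a : h.extend (Set.subset_univ _) := ⟨1, h.subset_extend _ (by simp)⟩
    have ha : Module.Basis.extend h a = 1 := by simp [a]
    let b : h.extend (Set.subset_univ _) := ⟨x, h.subset_extend _ (by simp)⟩
    have hb : Module.Basis.extend h b = x := by simp [b]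
    by_cases e : a = b
    · obtain e1 : (1:A) = x := congr_arg Subtype.val e
      exact ⟨1, by rw [← e1, map_one]⟩
    · exfalso
      have := DFunLike.congr_fun
        (DFunLike.congr_arg ((Module.Basis.extend h).tensorProduct (Module.Basis.extend h)).repr H) (a, b)
      simp only [Module.Basis.tensorProduct_repr_tmul_apply, ← ha, ← hb, Module.Basis.repr_self, smul_eq_mul,
        Finsupp.single_apply, e, Ne.symm e, ↓reduceIte, mul_one, mul_zero, one_ne_zero] at this
  · rw [LinearIndependent.pair_iff] at h'
    simp only [not_forall, not_and, exists_prop] at h'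
    obtain ⟨s, t, e, hst⟩ := h'
    have ht : t ≠ 0 := by
      rintro rfl
      rw [zero_smul, add_zero, Algebra.smul_def, mul_one] at e
      exact hst ((algebraMap k A).injective (by rw [e, map_zero])) rfl
    refine ⟨-(t⁻¹ * s), ?_⟩
    have h1 : (algebraMap k A) t * x = -(s • 1) := by
      rw [← Algebra.smul_def]
      linear_combination (norm := module) e
    have h2 : x = (algebraMap k A) t⁻¹ * ((algebraMap k A) t * x) := by
      rw [← mul_assoc, ← map_mul, inv_mul_cancel₀ ht, map_one, one_mul]
    rw [h2, h1, Algebra.smul_def, mul_one, map_neg, map_mul]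
    ring

theorem cocycles_mu2_equivalent_iff (k A : Type*) [Field k] [CommRing A] [Algebra k A]
    [Nontrivial A]
    (σk : k →+* k) (σA : A →+* A)
    (hσ : ∀ c : k, σA (algebraMap k A c) = algebraMap k A (σk c))
    (α α' : Aˣ) (a b a' b' : k)
    (h1 : ((α : Aˣ) : A) ^ 2 = algebraMap k A a)
    (h2 : σA ((α : Aˣ) : A) = algebraMap k A b * ((α : Aˣ) : A))
    (h3 : ((α' : Aˣ) : A) ^ 2 = algebraMap k A a')
    (h4 : σA ((α' : Aˣ) : A) = algebraMap k A b' * ((α' : Aˣ) : A)) :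
    (∃ g : Aˣ,
      ((g : Aˣ) : A) ^ 2 = 1 ∧
      σA ((g : Aˣ) : A) = ((g : Aˣ) : A) ∧
      ((α'⁻¹ : Aˣ) : A) ⊗ₜ[k] ((α' : Aˣ) : A) =
        ((1 : A) ⊗ₜ[k] ((g : Aˣ) : A)) *
          (((α⁻¹ : Aˣ) : A) ⊗ₜ[k] ((α : Aˣ) : A)) *
          (((g⁻¹ : Aˣ) : A) ⊗ₜ[k] (1 : A))) ↔
    (∃ l : k, l ≠ 0 ∧ a' = l ^ 2 * a ∧ l * b' = σk l * b) := by
  have inj : Function.Injective (algebraMap k A) := (algebraMap k A).injective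
  have injσ : Function.Injective σk := σk.injective
  constructor
  · rintro ⟨g, hg2, hgσ, hT⟩
    -- multiply the cocycle relation by (g*α) ⊗ α'⁻¹
    have key0 : ((g : A) * (α : A) * (α'⁻¹ : Aˣ) : A) ⊗ₜ[k] (1:A)
        = (1:A) ⊗ₜ[k] ((g : A) * (α : A) * ((α'⁻¹ : Aˣ) : A)) := by
      have h5 : (((α'⁻¹ : Aˣ) : A) ⊗ₜ[k] ((α' : Aˣ) : A))
            * (((g : A) * (α : A)) ⊗ₜ[k] ((α'⁻¹ : Aˣ) : A))
          = (((1 : A) ⊗ₜ[k] ((g : Aˣ) : A)) * (((α⁻¹ : Aˣ) : A) ⊗ₜ[k] ((α : Aˣ) : A))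
              * (((g⁻¹ : Aˣ) : A) ⊗ₜ[k] (1 : A)))
            * (((g : A) * (α : A)) ⊗ₜ[k] ((α'⁻¹ : Aˣ) : A)) := by rw [hT]
      rw [Algebra.TensorProduct.tmul_mul_tmul, Algebra.TensorProduct.tmul_mul_tmul,
        Algebra.TensorProduct.tmul_mul_tmul, Algebra.TensorProduct.tmul_mul_tmul] at h5
      have eA : ((α'⁻¹ : Aˣ) : A) * ((g : A) * (α : A)) = (g : A) * (α : A) * ((α'⁻¹ : Aˣ) : A) := by
        ring
      have eB : ((α' : Aˣ) : A) * ((α'⁻¹ : Aˣ) : A) = 1 := α'.mul_inv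
      have eC : (1 : A) * ((α⁻¹ : Aˣ) : A) * ((g⁻¹ : Aˣ) : A) * ((g : A) * (α : A)) = 1 := by
        calc (1 : A) * ((α⁻¹ : Aˣ) : A) * ((g⁻¹ : Aˣ) : A) * ((g : A) * (α : A))
            = (((α⁻¹ : Aˣ) : A) * (α : A)) * (((g⁻¹ : Aˣ) : A) * (g : A)) := by ring
          _ = 1 := by rw [α.inv_mul, g.inv_mul, mul_one]
      have eD : (g : A) * (α : A) * 1 * ((α'⁻¹ : Aˣ) : A)
          = (g : A) * (α : A) * ((α'⁻¹ : Aˣ) : A) := by ring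
      rw [eA, eB, eC, eD] at h5
      exact h5
    obtain ⟨μ, hμ⟩ := key_tmul _ key0.symm
    have hμ0 : μ ≠ 0 := by
      rintro rfl
      have hu : IsUnit ((g : A) * (α : A) * ((α'⁻¹ : Aˣ) : A)) :=
        ⟨g * α * α'⁻¹, by simp [Units.val_mul]⟩
      rw [hμ, map_zero] at hu
      exact not_isUnit_zero hu
    have hga : (g : A) * (α : A) = algebraMap k A μ * (α' : A) := by
      calc (g : A) * (α : A) = (g : A) * (α : A) * (((α'⁻¹ : Aˣ) : A) * (α' : A)) := by
            rw [α'.inv_mul, mul_one]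
        _ = ((g : A) * (α : A) * ((α'⁻¹ : Aˣ) : A)) * (α' : A) := by ring
        _ = algebraMap k A μ * (α' : A) := by rw [hμ]
    -- squares
    have hsq : a = μ ^ 2 * a' := by
      apply inj
      have := congrArg (· ^ 2) hga
      simp only [mul_pow] at this
      rw [hg2, one_mul, h1, h3] at this
      rw [map_mul, map_pow, this]
    -- sigma
    have hσeq : b * μ = σk μ * b' := by
      apply inj
      have := congrArg σA hga
      rw [map_mul, map_mul, hσ, hgσ, h2, h4] at this
      rw [map_mul, map_mul]
      calc algebraMap k A b * algebraMap k A μ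
          = algebraMap k A b * ((g : A) * (α : A) * ((α'⁻¹ : Aˣ) : A)) := by rw [hμ]
        _ = (g : A) * (algebraMap k A b * (α : A)) * ((α'⁻¹ : Aˣ) : A) := by ring
        _ = algebraMap k A (σk μ) * (algebraMap k A b' * (α' : A)) * ((α'⁻¹ : Aˣ) : A) := by
            rw [this]
        _ = algebraMap k A (σk μ) * algebraMap k A b' * ((α' : A) * ((α'⁻¹ : Aˣ) : A)) := by ring
        _ = algebraMap k A (σk μ) * algebraMap k A b' := by rw [α'.mul_inv, mul_one]
    have hσμ0 : σk μ ≠ 0 := fun h => hμ0 (injσ (by rw [h, map_zero]))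
    refine ⟨μ⁻¹, inv_ne_zero hμ0, ?_, ?_⟩
    · field_simp
      linear_combination -hsq
    · rw [map_inv₀]
      field_simp
      linear_combination -hσeq
  · rintro ⟨l, hl, ha', hb'⟩
    -- b ≠ 0
    have hbne : b ≠ 0 := by
      rintro rfl
      have hσu : IsUnit (σA (α : A)) := ⟨Units.map σA.toMonoidHom α, rfl⟩
      rw [h2, map_zero, zero_mul] at hσu
      exact not_isUnit_zero hσu
    have hσl0 : σk l ≠ 0 := fun h => hl (injσ (by rw [h, map_zero]))
    have hll : algebraMap k A l * algebraMap k A l⁻¹ = 1 := by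
      rw [← map_mul, mul_inv_cancel₀ hl, map_one]
    have hll' : algebraMap k A l⁻¹ * algebraMap k A l = 1 := by
      rw [← map_mul, inv_mul_cancel₀ hl, map_one]
    set cl : Aˣ := ⟨algebraMap k A l, algebraMap k A l⁻¹, hll, hll'⟩ with hcl
    refine ⟨cl⁻¹ * α' * α⁻¹, ?_, ?_, ?_⟩
    all_goals have hgval : ((cl⁻¹ * α' * α⁻¹ : Aˣ) : A)
        = algebraMap k A l⁻¹ * (α' : A) * ((α⁻¹ : Aˣ) : A) := rfl
    · rw [hgval]
      have hainv : ((α⁻¹ : Aˣ) : A) ^ 2 * algebraMap k A a = 1 := by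
        rw [← h1, ← mul_pow, α.inv_mul, one_pow]
      have hc : (l⁻¹) ^ 2 * (l ^ 2 * a) = a := by field_simp
      calc (algebraMap k A l⁻¹ * (α' : A) * ((α⁻¹ : Aˣ) : A)) ^ 2
          = algebraMap k A l⁻¹ ^ 2 * (α' : A) ^ 2 * ((α⁻¹ : Aˣ) : A) ^ 2 := by ring
        _ = algebraMap k A ((l⁻¹) ^ 2 * (l ^ 2 * a)) * ((α⁻¹ : Aˣ) : A) ^ 2 := by
            rw [h3, ha', ← map_pow, ← map_mul]
        _ = ((α⁻¹ : Aˣ) : A) ^ 2 * algebraMap k A a := by rw [hc]; ring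
        _ = 1 := hainv
    · rw [hgval]
      have hσainv : σA ((α⁻¹ : Aˣ) : A) = algebraMap k A b⁻¹ * ((α⁻¹ : Aˣ) : A) := by
        have h6 : σA (α : A) * σA ((α⁻¹ : Aˣ) : A) = 1 := by
          rw [← map_mul, α.mul_inv, map_one]
        rw [h2] at h6
        calc σA ((α⁻¹ : Aˣ) : A)
            = (algebraMap k A b⁻¹ * algebraMap k A b) * (((α⁻¹ : Aˣ) : A) * (α : A))
                * σA ((α⁻¹ : Aˣ) : A) := by
              rw [← map_mul, inv_mul_cancel₀ hbne, map_one, α.inv_mul, one_mul, one_mul]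
          _ = algebraMap k A b⁻¹ * ((α⁻¹ : Aˣ) : A)
                * (algebraMap k A b * (α : A) * σA ((α⁻¹ : Aˣ) : A)) := by ring
          _ = algebraMap k A b⁻¹ * ((α⁻¹ : Aˣ) : A) := by rw [h6, mul_one]
      have hs : σk l⁻¹ * (b' * b⁻¹) = l⁻¹ := by
        rw [map_inv₀]
        field_simp
        linear_combination hb'
      rw [map_mul, map_mul, hσ, h4, hσainv]
      calc algebraMap k A (σk l⁻¹) * (algebraMap k A b' * (α' : A))
            * (algebraMap k A b⁻¹ * ((α⁻¹ : Aˣ) : A))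
          = algebraMap k A (σk l⁻¹ * (b' * b⁻¹)) * ((α' : A) * ((α⁻¹ : Aˣ) : A)) := by
            rw [map_mul, map_mul]; ring
        _ = algebraMap k A l⁻¹ * (α' : A) * ((α⁻¹ : Aˣ) : A) := by rw [hs]; ring
    · have hginv : (((cl⁻¹ * α' * α⁻¹)⁻¹ : Aˣ) : A)
          = (α : A) * (((α'⁻¹ : Aˣ) : A) * algebraMap k A l) := by
        rw [mul_inv_rev, mul_inv_rev, inv_inv, inv_inv]
        rfl
      rw [Algebra.TensorProduct.tmul_mul_tmul, Algebra.TensorProduct.tmul_mul_tmul,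
        hgval, hginv, one_mul, mul_one]
      have eL : ((α⁻¹ : Aˣ) : A) * ((α : A) * (((α'⁻¹ : Aˣ) : A) * algebraMap k A l))
          = algebraMap k A l * ((α'⁻¹ : Aˣ) : A) := by
        rw [← mul_assoc, α.inv_mul, one_mul]; ring
      have eR : algebraMap k A l⁻¹ * (α' : A) * ((α⁻¹ : Aˣ) : A) * (α : A)
          = algebraMap k A l⁻¹ * (α' : A) := by
        rw [mul_assoc, α.inv_mul, mul_one]
      rw [eL, eR, ← Algebra.smul_def, ← Algebra.smul_def, TensorProduct.smul_tmul,
        smul_smul, mul_inv_cancel₀ hl, one_smul]
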